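/- Let A and B be skew-symmetric bilinear forms on a finite-dimensional vector space V over an algebraically closed field with B nondegenerate, and let P = B⁻¹A be the recursion operator (i.e., the linear operator defined by B(Pu, v) = A(u, v) for all u, v). Then the characteristic polynomial det(P − λ·Id) is the square of a polynomial in λ. -/

import Mathlib

open Polynomial Module LinearMap

section Aux

/-- The characteristic matrix of `M - μ • 1` is obtained from that of `M` by applying the
substitution `X ↦ X + μ` entrywise. -/
lemma my_charmatrix_sub_smul_one {n : Type*} [DecidableEq n] [Fintype n] {K : Type*} [CommRing K]
    (M : Matrix n n K) (μ : K) :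
    Matrix.charmatrix (M - μ • 1) =
      ((algEquivAevalXAddC μ : K[X] →+* K[X]) : K[X] →+* K[X]).mapMatrix
        (Matrix.charmatrix M) := by
  ext i j
  by_cases h : i = j
  · subst h
    simp [Matrix.charmatrix_apply_eq, algEquivAevalXAddC, Matrix.smul_apply, Matrix.one_apply_eq,
      ← comp_eq_aeval]
    ring
  · simp [Matrix.charmatrix_apply_ne _ _ _ h, algEquivAevalXAddC, Matrix.smul_apply,
      Matrix.one_apply_ne h, Matrix.sub_apply, ← comp_eq_aeval]

lemma my_matrix_charpoly_sub_smul_one {n : Type*} [DecidableEq n] [Fintype n] {K : Type*}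
    [CommRing K] (M : Matrix n n K) (μ : K) :
    (M - μ • 1).charpoly = M.charpoly.comp (X + C μ) := by
  rw [Matrix.charpoly, my_charmatrix_sub_smul_one, ← RingHom.map_det]
  rfl

lemma my_lin_charpoly_sub_smul_one {K V : Type*} [Field K] [AddCommGroup V] [Module K V]
    [FiniteDimensional K V] (f : V →ₗ[K] V) (μ : K) :
    LinearMap.charpoly (f - μ • 1) = (LinearMap.charpoly f).comp (X + C μ) := by
  let b := Module.finBasis K V
  rw [← LinearMap.charpoly_toMatrix f b, ← LinearMap.charpoly_toMatrix (f - μ • 1) b,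
    map_sub, _root_.map_smul, ← my_matrix_charpoly_sub_smul_one]
  rw [LinearMap.toMatrix_one]

/-- The algebraic multiplicity of an eigenvalue equals the dimension of the corresponding
generalized eigenspace. -/
lemma my_rootMult_eq_finrank {K V : Type*} [Field K] [AddCommGroup V] [Module K V]
    [FiniteDimensional K V] (f : Module.End K V) (μ : K) :
    (LinearMap.charpoly f).rootMultiplicity μ
      = Module.finrank K (f.maxGenEigenspace μ) := by
  rw [rootMultiplicity_eq_natTrailingDegree, ← my_lin_charpoly_sub_smul_one,
    ← LinearMap.finrank_maxGenEigenspace_zero_eq]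
  have h : (f - μ • 1).maxGenEigenspace 0 = f.maxGenEigenspace μ := by
    ext x
    simp [Module.End.mem_maxGenEigenspace]
  rw [h]

/-- A multiset in which every element has even multiplicity is of the form `s + s`. -/
lemma my_multiset_exists_add_self {α : Type*} [DecidableEq α] :
    ∀ (n : ℕ) (m : Multiset α), Multiset.card m = n → (∀ a, Even (m.count a)) →
      ∃ s, m = s + s := by
  intro n
  induction n using Nat.strong_induction_on with
  | _ n ih =>
    intro m hcard h
    rcases Multiset.empty_or_exists_mem m with rfl | ⟨a, ha⟩
    · exact ⟨0, rfl⟩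
    · have h1 : 1 ≤ m.count a := Multiset.one_le_count_iff_mem.mpr ha
      have h2 : 2 ≤ m.count a := by
        obtain ⟨k, hk⟩ := h a; omega
      have hle : Multiset.replicate 2 a ≤ m := by
        rw [Multiset.le_iff_count]
        intro b
        rw [Multiset.count_replicate]
        split_ifs with hba
        · subst hba; exact h2
        · exact Nat.zero_le _
      set m' := m - Multiset.replicate 2 a with hm'
      have hm : m' + Multiset.replicate 2 a = m := tsub_add_cancel_of_le hle
      have hcard' : Multiset.card m' = n - 2 := by
        rw [hm', Multiset.card_sub hle, Multiset.card_replicate, hcard]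
      have hcount : ∀ b, Even (m'.count b) := by
        intro b
        rw [hm', Multiset.count_sub, Multiset.count_replicate]
        obtain ⟨k, hk⟩ := h b
        rw [Nat.even_iff] at *
        split <;> omega
      have hn : 2 ≤ n := by
        have := Multiset.count_le_card a m; omega
      obtain ⟨s, hs⟩ := ih (n - 2) (by omega) m' hcard' hcount
      refine ⟨a ::ₘ s, ?_⟩
      rw [← hm, hs]
      refine Multiset.ext.mpr fun b => ?_
      simp only [Multiset.count_add, Multiset.count_cons, Multiset.count_replicate]
      rcases eq_or_ne a b with rfl | hab
      · simp; omega
      · simp [hab, Ne.symm hab]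

/-- A monic polynomial over an algebraically closed field all of whose root multiplicities are
even is a square. -/
lemma my_isSquare_of_even_rootMultiplicity {K : Type*} [Field K] [IsAlgClosed K] (p : K[X])
    (hp : p.Monic) (h : ∀ μ : K, Even (p.rootMultiplicity μ)) : ∃ q : K[X], p = q ^ 2 := by
  classical
  have hroots : p = (p.roots.map fun a => X - C a).prod :=
    (IsAlgClosed.splits p).eq_prod_roots_of_monic hp
  obtain ⟨s, hs⟩ := my_multiset_exists_add_self (Multiset.card p.roots) p.roots rfl
    (fun a => by rw [Polynomial.count_roots]; exact h a)
  refine ⟨(s.map fun a => X - C a).prod, ?_⟩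
  rw [hroots, hs, Multiset.map_add, Multiset.prod_add, sq]

/-- A vector space carrying a nondegenerate skew-symmetric bilinear form (over a field of
characteristic zero) is even-dimensional. -/
lemma my_even_finrank_of_skew_nondeg {K W : Type*} [Field K] [CharZero K] [AddCommGroup W]
    [Module K W] [FiniteDimensional K W] (Br : W →ₗ[K] W →ₗ[K] K)
    (hskew : ∀ x y, Br x y = - Br y x) (hnd : Br.SeparatingLeft) :
    Even (Module.finrank K W) := by
  classical
  let b := Module.finBasis K W
  set S := LinearMap.toMatrix₂ b b Br with hS
  have hdet : S.det ≠ 0 := (LinearMap.separatingLeft_iff_det_ne_zero b).mp hnd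
  have hT : S.transpose = -S := by
    ext i j
    simp only [Matrix.transpose_apply, Matrix.neg_apply, hS, LinearMap.toMatrix₂_apply]
    exact hskew (b j) (b i)
  rcases Nat.even_or_odd (Module.finrank K W) with he | ho
  · exact he
  · exfalso
    have h1 : S.det = (-S).det := by rw [← hT, Matrix.det_transpose]
    rw [Matrix.det_neg, Fintype.card_fin, ho.neg_one_pow, neg_one_mul] at h1
    have : (2 : K) * S.det = 0 := by linear_combination h1
    rcases mul_eq_zero.mp this with h | h
    · exact two_ne_zero h
    · exact hdet h

/-- Generalized eigenvectors of a `B`-self-adjoint operator for distinct eigenvalues are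
`B`-orthogonal. -/
lemma my_orth {K V : Type*} [Field K] [AddCommGroup V] [Module K V]
    (B : V →ₗ[K] V →ₗ[K] K) (P : Module.End K V)
    (hSA : ∀ u v, B (P u) v = B u (P v)) {μ ν : K} (hμν : μ ≠ ν) :
    ∀ (N m k : ℕ), m + k ≤ N → ∀ u v, ((P - μ • 1) ^ m) u = 0 → ((P - ν • 1) ^ k) v = 0 →
      B u v = 0 := by
  intro N
  induction N with
  | zero =>
    intro m k hmk u v hu hv
    have hm : m = 0 := by omega
    subst hm
    simp only [pow_zero, Module.End.one_apply] at hu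
    simp [hu]
  | succ N ih =>
    intro m k hmk u v hu hv
    rcases Nat.eq_zero_or_pos m with rfl | hm
    · simp only [pow_zero, Module.End.one_apply] at hu
      simp [hu]
    rcases Nat.eq_zero_or_pos k with rfl | hk
    · simp only [pow_zero, Module.End.one_apply] at hv
      simp [hv]
    obtain ⟨m', rfl⟩ : ∃ m', m = m' + 1 := ⟨m - 1, by omega⟩
    obtain ⟨k', rfl⟩ : ∃ k', k = k' + 1 := ⟨k - 1, by omega⟩
    rw [pow_succ, Module.End.mul_apply] at hu hv
    have h1 : B ((P - μ • 1) u) v = 0 := ih m' (k' + 1) (by omega) _ v hu (by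
      rw [pow_succ, Module.End.mul_apply]; exact hv)
    have h2 : B u ((P - ν • 1) v) = 0 := ih (m' + 1) k' (by omega) u _ (by
      rw [pow_succ, Module.End.mul_apply]; exact hu) hv
    have e1 : B (P u) v - μ * B u v = 0 := by
      simpa [LinearMap.sub_apply, LinearMap.smul_apply, map_sub, map_smul,
        smul_eq_mul] using h1
    have e2 : B u (P v) - ν * B u v = 0 := by
      simpa [LinearMap.sub_apply, LinearMap.smul_apply, map_sub, map_smul,
        smul_eq_mul] using h2
    have key : (μ - ν) * B u v = 0 := by
      have := hSA u v
      linear_combination e2 - e1 + this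
    rcases mul_eq_zero.mp key with h | h
    · exact absurd (sub_eq_zero.mp h) hμν
    · exact h

end Aux

/-- For skew-symmetric bilinear forms `A, B` on a finite-dimensional
vector space over an algebraically closed field of characteristic zero, with `B`
nondegenerate, the characteristic polynomial `det(P - λ·Id)` of the recursion
operator `P = B⁻¹A` is the square of a polynomial. -/
theorem charpoly_recursion_operator_isSquare
    {K V : Type*} [Field K] [IsAlgClosed K] [CharZero K]
    [AddCommGroup V] [Module K V] [FiniteDimensional K V]
    (A B : V →ₗ[K] V →ₗ[K] K)
    (hA : ∀ u v, A u v = - A v u) (hB : ∀ u v, B u v = - B v u)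
    (hBnd : B.Nondegenerate)
    (P : V →ₗ[K] V) (hP : ∀ u v, B (P u) v = A u v) :
    ∃ q : Polynomial K, LinearMap.charpoly P = q ^ 2 := by
  classical
  have hSA : ∀ u v, B (P u) v = B u (P v) := by
    intro u v
    rw [hP u v, hA u v, ← hP v u, hB (P v) u, neg_neg]
  have heven : ∀ μ : K, Even (Module.finrank K (Module.End.maxGenEigenspace P μ)) := by
    intro μ
    set W := Module.End.maxGenEigenspace P μ with hWdef
    refine my_even_finrank_of_skew_nondeg (B.domRestrict₁₂ W W) ?_ ?_
    · intro x y
      simpa [LinearMap.domRestrict₁₂_apply] using hB x.1 y.1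
    · intro x hx
      have hall : ∀ w : V, B x.1 w = 0 := by
        intro w
        have hw : w ∈ ⨆ ν : K, Module.End.maxGenEigenspace P ν := by
          rw [Module.End.iSup_maxGenEigenspace_eq_top]; trivial
        refine Submodule.iSup_induction (motive := fun w => B x.1 w = 0) _ hw ?_ ?_ ?_
        · intro ν y hy
          by_cases hν : ν = μ
          · subst hν
            simpa [LinearMap.domRestrict₁₂_apply] using hx ⟨y, hy⟩
          · obtain ⟨a, hxa⟩ := (Module.End.mem_maxGenEigenspace P μ x.1).mp x.2
            obtain ⟨c, hyc⟩ := (Module.End.mem_maxGenEigenspace P ν y).mp hy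
            exact my_orth B P hSA (Ne.symm hν) (a + c) a c le_rfl x.1 y hxa hyc
        · simp
        · intro y z hy hz
          rw [map_add, hy, hz, add_zero]
      exact Subtype.ext (hBnd.1 x.1 hall)
  have hmult : ∀ μ : K, Even ((LinearMap.charpoly P).rootMultiplicity μ) := by
    intro μ
    rw [my_rootMult_eq_finrank P μ]
    exact heven μ
  exact my_isSquare_of_even_rootMultiplicity _ (LinearMap.charpoly_monic P) hmult
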